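/- Fix m ≥ 3 and n = 2, let q = x_1² + x_2², and define Δ_1(A) = Res(F_2, q) and Δ_2(A) = Res(F_1, q) (resultants of binary forms of degrees m−1 and 2). Then: (i) if A is irregular (i.e. there exists x ≠ 0 with Ax^{m-1} = 0 and x_1² + x_2² = 0), then Δ_1(A) = Δ_2(A) = 0; (ii) regarding the 2^m entries a_{i_1...i_m} as indeterminates over ℂ, Δ_1 and Δ_2 are nonzero polynomials that have no common non-constant factor in ℂ[a_{i_1...i_m}]. -/

import Mathlib

open Finset

noncomputable section

/-- `(A x^{m-1})_i` for an `m`th order `n`-dimensional tensor; the tensor is given with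
its first index separated: `A i g` is the entry `a_{i, g 1, ..., g (m-1)}`. -/
def tApply {R : Type*} [CommRing R] {m1 n : ℕ} (A : Fin n → (Fin m1 → Fin n) → R)
    (x : Fin n → R) (i : Fin n) : R :=
  ∑ g : Fin m1 → Fin n, A i g * ∏ j, x (g j)

/-- `x^T x = ∑ i, x i ^ 2`. -/
def dotSq {R : Type*} [CommRing R] {n : ℕ} (x : Fin n → R) : R := ∑ i, x i ^ 2

/-- A tensor is regular if the system `A x^{m-1} = 0, x^T x = 0` has no nonzero solution. -/
def Regular {m1 n : ℕ} (A : Fin n → (Fin m1 → Fin n) → ℂ) : Prop :=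
  ¬∃ x : Fin n → ℂ, x ≠ 0 ∧ (∀ i, tApply A x i = 0) ∧ dotSq x = 0

/-- For `n = 2`: `bCoeff A 0 i = b_{i+1}` and `bCoeff A 1 i = c_{i+1}`, i.e. the coefficient
of `x₁^{m-1-i} x₂^i` in the binary form `F_{i0+1}(x) = (A x^{m-1})_{i0+1}`. -/
def bCoeff {R : Type*} [CommRing R] {m1 : ℕ} (A : Fin 2 → (Fin m1 → Fin 2) → R)
    (i0 : Fin 2) (i : ℕ) : R :=
  ∑ g ∈ univ.filter (fun g : Fin m1 → Fin 2 => (univ.filter fun k => g k = 1).card = i), A i0 g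

/-- The Sylvester matrix of binary forms of degrees `d` and `e` with coefficient
sequences `f` and `g` (`f i` is the coefficient of `x₁^{d-i} x₂^i`, similarly `g`):
the first `e` rows are shifted copies of `(f 0, ..., f d)`, the last `d` rows are
shifted copies of `(g 0, ..., g e)`. -/
def sylM {R : Type*} [CommRing R] (d e : ℕ) (f g : ℕ → R) :
    Matrix (Fin (d + e)) (Fin (d + e)) R := fun i j =>
  if (i : ℕ) < e then
    (if (i : ℕ) ≤ (j : ℕ) ∧ (j : ℕ) ≤ (i : ℕ) + d then f ((j : ℕ) - (i : ℕ)) else 0)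
  else
    (if (i : ℕ) - e ≤ (j : ℕ) ∧ (j : ℕ) ≤ ((i : ℕ) - e) + e then g ((j : ℕ) - ((i : ℕ) - e)) else 0)

/-- The resultant of binary forms of degrees `d` and `e`. -/
def Res {R : Type*} [CommRing R] (d e : ℕ) (f g : ℕ → R) : R := (sylM d e f g).det

/-- Coefficient sequence of the binary quadratic form `q = x₁² + x₂²`. -/
def qCoeff {R : Type*} [CommRing R] (i : ℕ) : R := if i = 0 ∨ i = 2 then 1 else 0

/-! ### Auxiliary lemmas -/

section Aux
variable {R S : Type*} [CommRing R] [CommRing S]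

lemma sylM_map (h : R →+* S) (d e : ℕ) (f g : ℕ → R) :
    (sylM d e f g).map h = sylM d e (fun k => h (f k)) (fun k => h (g k)) := by
  ext i j
  simp only [sylM, Matrix.map_apply, apply_ite h, map_zero]

lemma Res_map (h : R →+* S) (d e : ℕ) (f g : ℕ → R) :
    h (Res d e f g) = Res d e (fun k => h (f k)) (fun k => h (g k)) := by
  rw [Res, Res, RingHom.map_det, RingHom.mapMatrix_apply, sylM_map]

lemma qCoeff_map (h : R →+* S) : (fun k => h (qCoeff k)) = (qCoeff : ℕ → S) := by
  funext k
  simp only [qCoeff, apply_ite h, map_one, map_zero]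

lemma bCoeff_map (h : R →+* S) {m1 : ℕ} (A : Fin 2 → (Fin m1 → Fin 2) → R) (i0 : Fin 2) (k : ℕ) :
    h (bCoeff A i0 k) = bCoeff (fun i g => h (A i g)) i0 k := by
  simp only [bCoeff, map_sum]

lemma Res_bCoeff_map (h : R →+* S) {m1 : ℕ} (A : Fin 2 → (Fin m1 → Fin 2) → R) (i0 : Fin 2) :
    h (Res m1 2 (bCoeff A i0) qCoeff) = Res m1 2 (bCoeff (fun i g => h (A i g)) i0) qCoeff := by
  rw [Res_map, qCoeff_map]
  congr 1
  funext k
  exact bCoeff_map h A i0 k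

lemma bCoeff_congr {m1 : ℕ} (A B : Fin 2 → (Fin m1 → Fin 2) → R) (i0 i1 : Fin 2)
    (hAB : ∀ g, A i0 g = B i1 g) : bCoeff A i0 = bCoeff B i1 := by
  funext k
  exact Finset.sum_congr rfl fun g _ => hAB g

lemma bCoeff_delta {m1 : ℕ} (c : R) (i0 : Fin 2) (k : ℕ) :
    bCoeff (fun (_ : Fin 2) (g : Fin m1 → Fin 2) => if g = (fun _ => 0) then c else 0) i0 k
      = if k = 0 then c else 0 := by
  rw [bCoeff, Finset.sum_ite_eq' _ (fun _ => (0 : Fin 2))]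
  have hcard : (univ.filter fun j : Fin m1 => (fun _ => (0 : Fin 2)) j = 1).card = 0 := by
    simp [Finset.filter_eq_empty_iff]
  by_cases hk : k = 0 <;> simp [hk, hcard, eq_comm]

lemma Res_delta (m1 : ℕ) :
    Res m1 2 (fun k => if k = 0 then (1 : R) else 0) qCoeff = 1 := by
  rw [Res]
  rw [Matrix.det_of_lowerTriangular]
  · rw [Finset.prod_eq_one]
    intro i _
    rcases lt_or_ge (i : ℕ) 2 with hi | hi
    · rw [sylM, if_pos hi, if_pos ⟨le_refl _, Nat.le_add_right _ _⟩]
      simp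
    · have h1 : (i : ℕ) - 2 ≤ (i : ℕ) := Nat.sub_le _ _
      have h2 : (i : ℕ) ≤ (i : ℕ) - 2 + 2 := by omega
      rw [sylM, if_neg (by omega), if_pos ⟨h1, h2⟩]
      have : (i : ℕ) - ((i : ℕ) - 2) = 2 := by omega
      rw [this, qCoeff, if_pos (Or.inr rfl)]
  · intro i j hij
    have hij' : (i : ℕ) < (j : ℕ) := by
      have := OrderDual.toDual_lt_toDual.mp hij
      exact_mod_cast this
    rcases lt_or_ge (i : ℕ) 2 with hi | hi
    · rw [sylM, if_pos hi]
      have hne : (j : ℕ) - (i : ℕ) ≠ 0 := by omega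
      split
      · simp [hne]
      · rfl
    · rw [sylM, if_neg (by omega), if_neg (by omega)]

lemma fin2_eq_zero (a : Fin 2) (h : a ≠ 1) : a = 0 := by omega

lemma prod_eq {m1 : ℕ} (x : Fin 2 → R) (g : Fin m1 → Fin 2) :
    (∏ j, x (g j)) = x 0 ^ (m1 - (univ.filter fun k => g k = 1).card)
      * x 1 ^ (univ.filter fun k => g k = 1).card := by
  rw [← Finset.prod_filter_mul_prod_filter_not univ (fun k => g k = 1)]
  have h1 : ∏ j ∈ univ.filter (fun k => g k = 1), x (g j)
      = x 1 ^ (univ.filter fun k => g k = 1).card := by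
    rw [← Finset.prod_const]
    exact Finset.prod_congr rfl fun j hj => by rw [(Finset.mem_filter.mp hj).2]
  have h2 : ∏ j ∈ univ.filter (fun k => ¬ g k = 1), x (g j)
      = x 0 ^ (univ.filter fun k => ¬ g k = 1).card := by
    rw [← Finset.prod_const]
    exact Finset.prod_congr rfl fun j hj => by
      rw [fin2_eq_zero _ (Finset.mem_filter.mp hj).2]
  have h3 : (univ.filter fun k => ¬ g k = 1).card
      = m1 - (univ.filter fun k => g k = 1).card := by
    have := Finset.card_filter_add_card_filter_not (s := (univ : Finset (Fin m1)))
      (p := fun k : Fin m1 => g k = 1)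
    simp only [Finset.card_univ, Fintype.card_fin] at this
    omega
  rw [h1, h2, h3, mul_comm]

lemma tApply_expand {m1 : ℕ} (A : Fin 2 → (Fin m1 → Fin 2) → R)
    (x : Fin 2 → R) (i0 : Fin 2) :
    tApply A x i0 = ∑ k ∈ range (m1 + 1), bCoeff A i0 k * (x 0 ^ (m1 - k) * x 1 ^ k) := by
  rw [tApply]
  rw [← Finset.sum_fiberwise_of_maps_to (g := fun g : Fin m1 → Fin 2 =>
      (univ.filter fun k => g k = 1).card) (t := range (m1 + 1))
      (fun g _ => Finset.mem_range.mpr (Nat.lt_succ_of_le (by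
        simpa using Finset.card_filter_le univ (fun k => g k = 1))))]
  refine Finset.sum_congr rfl fun k _ => ?_
  rw [bCoeff, Finset.sum_mul]
  refine Finset.sum_congr rfl fun g hg => ?_
  have hc : (univ.filter fun j => g j = 1).card = k := (Finset.mem_filter.mp hg).2
  rw [prod_eq, hc]

end Aux

lemma res_zero_of_root {d : ℕ} (f : ℕ → ℂ) (x : Fin 2 → ℂ) (hx : x ≠ 0)
    (hq : x 0 ^ 2 + x 1 ^ 2 = 0)
    (hF : ∑ k ∈ range (d + 1), f k * (x 0 ^ (d - k) * x 1 ^ k) = 0) :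
    Res d 2 f qCoeff = 0 := by
  have hx01 : x 0 ≠ 0 ∧ x 1 ≠ 0 := by
    by_contra hcon
    have h0 : x 0 = 0 ∧ x 1 = 0 := by
      rcases Classical.em (x 0 = 0) with h | h
      · refine ⟨h, ?_⟩
        have : x 1 ^ 2 = 0 := by rw [h] at hq; simpa using hq
        exact pow_eq_zero_iff (n := 2) (by norm_num) |>.mp this
      · refine absurd ?_ hcon
        have h1 : x 1 ≠ 0 := by
          intro h1
          have : x 0 ^ 2 = 0 := by rw [h1] at hq; simpa using hq
          exact h (pow_eq_zero_iff (n := 2) (by norm_num) |>.mp this)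
        exact ⟨h, h1⟩
    exact hx (funext fun i => by fin_cases i <;> simp [h0.1, h0.2])
  obtain ⟨hx0, hx1⟩ := hx01
  set vn : ℕ → ℂ := fun j => x 0 ^ (d + 1 - j) * x 1 ^ j with hvn
  rw [Res, ← Matrix.exists_mulVec_eq_zero_iff]
  refine ⟨fun j => vn (j : ℕ), ?_, ?_⟩
  · intro hv
    have h3 := congrFun hv ⟨0, by omega⟩
    simp only [hvn, Pi.zero_apply] at h3
    simp only [pow_zero, mul_one, Nat.sub_zero] at h3
    exact hx0 (pow_eq_zero_iff (Nat.succ_ne_zero d) |>.mp h3)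
  · funext i
    show ∑ j, sylM d 2 f qCoeff i j * vn (j : ℕ) = 0
    have hrange : ∀ en : ℕ → ℂ, (∀ j : Fin (d + 2), sylM d 2 f qCoeff i j = en (j : ℕ)) →
        (∑ j, sylM d 2 f qCoeff i j * vn (j : ℕ)) = ∑ j ∈ range (d + 2), en j * vn j := by
      intro en hen
      rw [← Fin.sum_univ_eq_sum_range (fun j => en j * vn j)]
      exact Finset.sum_congr rfl fun j _ => by rw [hen j]
    rcases lt_or_ge (i : ℕ) 2 with hi | hi
    · rw [hrange (fun j => if (i : ℕ) ≤ j ∧ j ≤ (i : ℕ) + d then f (j - (i : ℕ)) else 0)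
        (fun j => by rw [sylM, if_pos hi])]
      interval_cases h : (i : ℕ)
      · rw [Finset.sum_range_succ]
        rw [if_neg (by omega)]
        have : ∀ j ∈ range (d + 1),
            (if 0 ≤ j ∧ j ≤ 0 + d then f (j - 0) else 0) * vn j
              = x 0 * (f j * (x 0 ^ (d - j) * x 1 ^ j)) := by
          intro j hj
          have hjd : j ≤ d := by simpa [Nat.lt_succ_iff] using hj
          rw [if_pos (by omega), Nat.sub_zero]
          simp only [hvn]
          have : d + 1 - j = (d - j) + 1 := by omega
          rw [this, pow_succ]
          ring
        rw [Finset.sum_congr rfl this, ← Finset.mul_sum, hF]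
        ring
      · rw [Finset.sum_range_succ']
        rw [if_neg (by omega)]
        have : ∀ j ∈ range (d + 1),
            (if 1 ≤ j + 1 ∧ j + 1 ≤ 1 + d then f (j + 1 - 1) else 0) * vn (j + 1)
              = x 1 * (f j * (x 0 ^ (d - j) * x 1 ^ j)) := by
          intro j hj
          have hjd : j ≤ d := by simpa [Nat.lt_succ_iff] using hj
          rw [if_pos (by omega)]
          simp only [Nat.add_sub_cancel, hvn]
          show f j * (x 0 ^ (d + 1 - (j + 1)) * x 1 ^ (j + 1)) = _
          have h1 : d + 1 - (j + 1) = d - j := by omega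
          rw [h1, pow_succ]
          ring
        rw [Finset.sum_congr rfl this, ← Finset.mul_sum, hF]
        ring
    · rw [hrange (fun j => if (i : ℕ) - 2 ≤ j ∧ j ≤ ((i : ℕ) - 2) + 2 then
          qCoeff (j - ((i : ℕ) - 2)) else 0)
        (fun j => by rw [sylM, if_neg (by omega)])]
      obtain ⟨a, ha⟩ : ∃ a, (i : ℕ) = a + 2 := ⟨(i : ℕ) - 2, by omega⟩
      have had : a + 2 < d + 2 := by rw [← ha]; exact i.isLt
      have hsub : (i : ℕ) - 2 = a := by omega
      rw [hsub]
      rw [← Finset.sum_subset (h := fun j hj => Finset.mem_range.mpr (by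
          have := Finset.mem_Icc.mp hj; omega))
        (s₁ := Finset.Icc a (a + 2))
        (hf := fun j _ hj => by
          rw [if_neg (by simpa [Finset.mem_Icc] using hj)]
          ring)]
      rw [show Finset.Icc a (a + 2) = {a, a + 1, a + 2} from by
        ext y; simp only [Finset.mem_Icc, Finset.mem_insert, Finset.mem_singleton]; omega]
      rw [Finset.sum_insert (by simp only [Finset.mem_insert, Finset.mem_singleton]; omega),
        Finset.sum_insert (by simp only [Finset.mem_singleton]; omega),
        Finset.sum_singleton]
      rw [if_pos (by omega), if_pos (by omega), if_pos (by omega)]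
      simp only [Nat.add_sub_cancel_left, Nat.sub_self, qCoeff]
      norm_num
      obtain ⟨b, hb⟩ : ∃ b, d + 1 - a = b + 2 := ⟨d + 1 - a - 2, by omega⟩
      have hb2 : d + 1 - (a + 2) = b := by omega
      simp only [hvn, hb, hb2]
      rw [pow_add, pow_add]
      linear_combination (x 0 ^ b * x 1 ^ a) * hq

lemma isUnit_mv_fin {R : Type*} [CommRing R] [IsDomain R] {n : ℕ}
    (w : MvPolynomial (Fin n) R) (h : IsUnit w) : ∃ c : R, w = MvPolynomial.C c := by
  induction n with
  | zero =>
    obtain ⟨c, hc⟩ := MvPolynomial.C_surjective (Fin 0) w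
    exact ⟨c, hc.symm⟩
  | succ n ih =>
    have h2 : IsUnit (MvPolynomial.finSuccEquiv R n w) := h.map _
    obtain ⟨r, hru, hr⟩ := Polynomial.isUnit_iff.mp h2
    obtain ⟨c, rfl⟩ := ih r hru
    refine ⟨c, (MvPolynomial.finSuccEquiv R n).injective ?_⟩
    rw [← hr]
    have : (MvPolynomial.finSuccEquiv R n) (MvPolynomial.C c)
        = algebraMap R _ c := (MvPolynomial.finSuccEquiv R n).commutes c
    rw [this]
    rfl

lemma isUnit_mv_constant {R : Type*} [CommRing R] [IsDomain R] {σ : Type*} [Fintype σ]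
    (w : MvPolynomial σ R) (h : IsUnit w) : ∃ c : R, w = MvPolynomial.C c := by
  classical
  let e := Fintype.equivFin σ
  have h2 : IsUnit (MvPolynomial.renameEquiv R e w) := h.map _
  obtain ⟨c, hc⟩ := isUnit_mv_fin _ h2
  refine ⟨c, ?_⟩
  have h3 := congrArg (MvPolynomial.renameEquiv R e).symm hc
  rw [AlgEquiv.symm_apply_apply] at h3
  rw [h3]
  simp [MvPolynomial.renameEquiv]

/-- For `m ≥ 3`, `n = 2`, with `Δ₁(A) = Res(F₂, q)` and
`Δ₂(A) = Res(F₁, q)` (`q = x₁² + x₂²`):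
(i) if `A` is irregular then `Δ₁(A) = Δ₂(A) = 0`;
(ii) for the generic tensor (entries as indeterminates over `ℂ`), `Δ₁` and `Δ₂` are
nonzero polynomials with no common non-constant factor. -/
theorem stmt11 {m : ℕ} (hm : 3 ≤ m) :
    (∀ A : Fin 2 → (Fin (m - 1) → Fin 2) → ℂ,
      (∃ x : Fin 2 → ℂ, x ≠ 0 ∧ (∀ i, tApply A x i = 0) ∧ x 0 ^ 2 + x 1 ^ 2 = 0) →
        Res (m - 1) 2 (bCoeff A 1) qCoeff = 0 ∧ Res (m - 1) 2 (bCoeff A 0) qCoeff = 0) ∧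
    (∀ Agen : Fin 2 → (Fin (m - 1) → Fin 2) → MvPolynomial (Fin 2 × (Fin (m - 1) → Fin 2)) ℂ,
      (∀ i g, Agen i g = MvPolynomial.X (i, g)) →
        Res (m - 1) 2 (bCoeff Agen 1) qCoeff ≠ 0 ∧
        Res (m - 1) 2 (bCoeff Agen 0) qCoeff ≠ 0 ∧
        ∀ p : MvPolynomial (Fin 2 × (Fin (m - 1) → Fin 2)) ℂ,
          p ∣ Res (m - 1) 2 (bCoeff Agen 1) qCoeff →
          p ∣ Res (m - 1) 2 (bCoeff Agen 0) qCoeff → IsUnit p) := by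

  classical
  constructor
  · rintro A ⟨x, hx, hAx, hq⟩
    have key : ∀ i0 : Fin 2, Res (m - 1) 2 (bCoeff A i0) qCoeff = 0 := by
      intro i0
      apply res_zero_of_root _ x hx hq
      rw [← tApply_expand]
      exact hAx i0
    exact ⟨key 1, key 0⟩
  · intro Agen hA
    -- nonvanishing via evaluation at the point a0
    set a0 : (Fin 2 × (Fin (m - 1) → Fin 2)) → ℂ := fun s => if s.2 = (fun _ => 0) then 1 else 0 with ha0
    have hval : ∀ i0 : Fin 2,
        (MvPolynomial.eval a0) (Res (m - 1) 2 (bCoeff Agen i0) qCoeff) = 1 := by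
      intro i0
      rw [Res_bCoeff_map (MvPolynomial.eval a0) Agen i0]
      have h1 : bCoeff (fun (i : Fin 2) (g : (Fin (m - 1) → Fin 2)) => (MvPolynomial.eval a0) (Agen i g)) i0
          = bCoeff (fun (_ : Fin 2) (g : (Fin (m - 1) → Fin 2)) => if g = (fun _ => 0) then (1 : ℂ) else 0) i0 := by
        apply bCoeff_congr
        intro g
        rw [hA i0 g, MvPolynomial.eval_X]
      rw [h1]
      have h2 : bCoeff (fun (_ : Fin 2) (g : (Fin (m - 1) → Fin 2)) => if g = (fun _ => 0) then (1 : ℂ) else 0) i0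
          = fun k => if k = 0 then (1 : ℂ) else 0 := by
        funext k
        exact bCoeff_delta 1 i0 k
      rw [h2, Res_delta]
    have hne : ∀ i0 : Fin 2, Res (m - 1) 2 (bCoeff Agen i0) qCoeff ≠ 0 := by
      intro i0 h0
      have := hval i0
      rw [h0, map_zero] at this
      exact one_ne_zero this.symm
    refine ⟨hne 1, hne 0, ?_⟩
    intro p hp1 hp0
    -- the splitting isomorphism
    let e2 : (Fin 2 × (Fin (m - 1) → Fin 2)) ≃ ((Fin (m - 1) → Fin 2) ⊕ (Fin (m - 1) → Fin 2)) :=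
      { toFun := fun s => if s.1 = 0 then Sum.inr s.2 else Sum.inl s.2
        invFun := Sum.elim (fun g => (1, g)) (fun g => (0, g))
        left_inv := by
          rintro ⟨i, g⟩
          fin_cases i <;> simp
        right_inv := by
          rintro (g | g) <;> simp }
    let Φ : MvPolynomial (Fin 2 × (Fin (m - 1) → Fin 2)) ℂ ≃ₐ[ℂ] MvPolynomial (Fin (m - 1) → Fin 2) (MvPolynomial (Fin (m - 1) → Fin 2) ℂ) :=
      (MvPolynomial.renameEquiv ℂ e2).trans (MvPolynomial.sumAlgEquiv ℂ (Fin (m - 1) → Fin 2) (Fin (m - 1) → Fin 2))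
    have he2a : ∀ g : (Fin (m - 1) → Fin 2), e2 (1, g) = Sum.inl g := fun g => by simp [e2]
    have he2b : ∀ g : (Fin (m - 1) → Fin 2), e2 (0, g) = Sum.inr g := fun g => by simp [e2]
    have hΦ1 : ∀ g : (Fin (m - 1) → Fin 2), Φ (MvPolynomial.X (1, g)) = MvPolynomial.X g := by
      intro g
      show (MvPolynomial.sumAlgEquiv ℂ (Fin (m - 1) → Fin 2) (Fin (m - 1) → Fin 2))
        ((MvPolynomial.renameEquiv ℂ e2) (MvPolynomial.X (1, g))) = _
      rw [MvPolynomial.renameEquiv_apply, MvPolynomial.rename_X, he2a]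
      exact MvPolynomial.sumAlgEquiv_X_inl _ _ _ g
    have hΦ0 : ∀ g : (Fin (m - 1) → Fin 2), Φ (MvPolynomial.X (0, g)) = MvPolynomial.C (MvPolynomial.X g) := by
      intro g
      show (MvPolynomial.sumAlgEquiv ℂ (Fin (m - 1) → Fin 2) (Fin (m - 1) → Fin 2))
        ((MvPolynomial.renameEquiv ℂ e2) (MvPolynomial.X (0, g))) = _
      rw [MvPolynomial.renameEquiv_apply, MvPolynomial.rename_X, he2b]
      exact MvPolynomial.sumAlgEquiv_X_inr _ _ _ g
    set ΦR : MvPolynomial (Fin 2 × (Fin (m - 1) → Fin 2)) ℂ →+* MvPolynomial (Fin (m - 1) → Fin 2) (MvPolynomial (Fin (m - 1) → Fin 2) ℂ) := (Φ : _ ≃+* _).toRingHom with hΦR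
    have hΦRapp : ∀ q, ΦR q = Φ q := fun q => rfl
    -- the universal resultant D over (MvPolynomial (Fin (m - 1) → Fin 2) ℂ)
    set B1 : ℕ → (MvPolynomial (Fin (m - 1) → Fin 2) ℂ) := bCoeff (fun (_ : Fin 2) (g : (Fin (m - 1) → Fin 2)) => (MvPolynomial.X g : (MvPolynomial (Fin (m - 1) → Fin 2) ℂ))) 0 with hB1
    set D : (MvPolynomial (Fin (m - 1) → Fin 2) ℂ) := Res (m - 1) 2 B1 qCoeff with hD
    -- D is nonzero
    set a1 : (Fin (m - 1) → Fin 2) → ℂ := fun g => if g = (fun _ => 0) then 1 else 0 with ha1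
    have hD1 : (MvPolynomial.eval a1) D = 1 := by
      rw [hD, hB1, Res_bCoeff_map (MvPolynomial.eval a1)]
      have h1 : bCoeff (fun (i : Fin 2) (g : (Fin (m - 1) → Fin 2)) => (MvPolynomial.eval a1) (MvPolynomial.X g))
            (0 : Fin 2)
          = bCoeff (fun (_ : Fin 2) (g : (Fin (m - 1) → Fin 2)) => if g = (fun _ => 0) then (1 : ℂ) else 0) 0 := by
        apply bCoeff_congr
        intro g
        rw [MvPolynomial.eval_X, ha1]
      rw [h1]
      have h2 : bCoeff (fun (_ : Fin 2) (g : (Fin (m - 1) → Fin 2)) => if g = (fun _ => 0) then (1 : ℂ) else 0)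
            (0 : Fin 2) = fun k => if k = 0 then (1 : ℂ) else 0 := by
        funext k
        exact bCoeff_delta 1 0 k
      rw [h2, Res_delta]
    have hDne : D ≠ 0 := by
      intro h0
      rw [h0, map_zero] at hD1
      exact one_ne_zero hD1.symm
    -- images of the two resultants under Φ
    have hΔ1 : ΦR (Res (m - 1) 2 (bCoeff Agen 1) qCoeff)
        = Res (m - 1) 2 (bCoeff (fun (_ : Fin 2) (g : (Fin (m - 1) → Fin 2)) =>
            (MvPolynomial.X g : MvPolynomial (Fin (m - 1) → Fin 2) (MvPolynomial (Fin (m - 1) → Fin 2) ℂ))) 0) qCoeff := by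
      rw [Res_bCoeff_map]
      congr 1
      apply bCoeff_congr
      intro g
      rw [hA 1 g, hΦRapp, hΦ1]
    have hΔ0 : ΦR (Res (m - 1) 2 (bCoeff Agen 0) qCoeff) = MvPolynomial.C D := by
      rw [Res_bCoeff_map]
      rw [hD, hB1, Res_bCoeff_map (MvPolynomial.C : (MvPolynomial (Fin (m - 1) → Fin 2) ℂ) →+* MvPolynomial (Fin (m - 1) → Fin 2) (MvPolynomial (Fin (m - 1) → Fin 2) ℂ))]
      congr 1
      apply bCoeff_congr
      intro g
      rw [hA 0 g, hΦRapp, hΦ0]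
    -- the generic resultant over (MvPolynomial (Fin (m - 1) → Fin 2) ℂ), and its relation to D
    have hDup : Res (m - 1) 2 (bCoeff (fun (_ : Fin 2) (g : (Fin (m - 1) → Fin 2)) =>
          (MvPolynomial.X g : MvPolynomial (Fin (m - 1) → Fin 2) (MvPolynomial (Fin (m - 1) → Fin 2) ℂ))) 0) qCoeff
        = MvPolynomial.map (algebraMap ℂ (MvPolynomial (Fin (m - 1) → Fin 2) ℂ)) D := by
      rw [hD, hB1, Res_bCoeff_map (MvPolynomial.map (algebraMap ℂ (MvPolynomial (Fin (m - 1) → Fin 2) ℂ)))]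
      congr 1
      apply bCoeff_congr
      intro g
      rw [MvPolynomial.map_X]
    -- p's image is a "constant" polynomial
    set P : MvPolynomial (Fin (m - 1) → Fin 2) (MvPolynomial (Fin (m - 1) → Fin 2) ℂ) := ΦR p with hP
    have hP1 : P ∣ MvPolynomial.map (algebraMap ℂ (MvPolynomial (Fin (m - 1) → Fin 2) ℂ)) D := by
      rw [← hDup, ← hΔ1]
      exact map_dvd ΦR hp1
    have hP0 : P ∣ MvPolynomial.C D := by
      rw [← hΔ0]
      exact map_dvd ΦR hp0
    have hcoeffP : ∀ k : (Fin (m - 1) → Fin 2) →₀ ℕ, k ≠ 0 → MvPolynomial.coeff k P = 0 := by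
      intro k hk
      have hzero : D * MvPolynomial.coeff k P = 0 := by
        apply MvPolynomial.funext (q := 0)
        intro y
        rw [map_zero, map_mul]
        by_cases hy : MvPolynomial.eval y D = 0
        · rw [hy, zero_mul]
        · have hPy : MvPolynomial.map (MvPolynomial.eval y : (MvPolynomial (Fin (m - 1) → Fin 2) ℂ) →+* ℂ) P
              ∣ MvPolynomial.C (MvPolynomial.eval y D) := by
            have := map_dvd (MvPolynomial.map (MvPolynomial.eval y : (MvPolynomial (Fin (m - 1) → Fin 2) ℂ) →+* ℂ)) hP0
            rwa [MvPolynomial.map_C] at this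
          have hunit : IsUnit (MvPolynomial.map (MvPolynomial.eval y : (MvPolynomial (Fin (m - 1) → Fin 2) ℂ) →+* ℂ) P) :=
            isUnit_of_dvd_unit hPy ((Ne.isUnit hy).map (MvPolynomial.C : ℂ →+* MvPolynomial (Fin (m - 1) → Fin 2) ℂ))
          obtain ⟨c, hc⟩ := isUnit_mv_constant _ hunit
          have : MvPolynomial.coeff k (MvPolynomial.map (MvPolynomial.eval y : (MvPolynomial (Fin (m - 1) → Fin 2) ℂ) →+* ℂ) P)
              = 0 := by
            rw [hc, MvPolynomial.coeff_C, if_neg (by exact fun h => hk h.symm)]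
          rw [MvPolynomial.coeff_map] at this
          rw [this, mul_zero]
      rcases mul_eq_zero.mp hzero with h | h
      · exact absurd h hDne
      · exact h
    have hPC : P = MvPolynomial.C (MvPolynomial.coeff 0 P) := by
      apply MvPolynomial.ext
      intro k
      by_cases hk : k = 0
      · rw [hk, MvPolynomial.coeff_C, if_pos rfl]
      · rw [hcoeffP k hk, MvPolynomial.coeff_C, if_neg (by exact fun h => hk h.symm)]
    -- the constant is a unit
    obtain ⟨k0, hk0⟩ := MvPolynomial.ne_zero_iff.mp hDne
    obtain ⟨Q, hQ⟩ := hP1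
    have hcoeffQ : MvPolynomial.coeff 0 P * MvPolynomial.coeff k0 Q
        = MvPolynomial.C (MvPolynomial.coeff k0 D) := by
      have := congrArg (MvPolynomial.coeff k0) hQ
      rw [MvPolynomial.coeff_map] at this
      rw [hPC] at this
      rw [MvPolynomial.coeff_C_mul] at this
      rw [← this]
      rfl
    have hcunit : IsUnit (MvPolynomial.coeff 0 P) := by
      apply isUnit_of_dvd_unit ⟨MvPolynomial.coeff k0 Q, hcoeffQ.symm⟩
      exact (Ne.isUnit hk0).map (MvPolynomial.C : ℂ →+* MvPolynomial (Fin (m - 1) → Fin 2) ℂ)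
    have hPunit : IsUnit P := by
      rw [hPC]
      exact hcunit.map MvPolynomial.C
    have := hPunit.map Φ.symm
    rwa [hP, hΦRapp, AlgEquiv.symm_apply_apply] at this
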